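/- On a quasi-Sasakian manifold the Levi-Civita connection satisfies g((∇_X φ)Y, Z) = dη(φY, X)η(Z) − dη(φZ, X)η(Y) and g(∇_X ξ, Y) = dη(X, Y) for all vector fields X, Y, Z; equivalently g((∇_X φ)Y, Z) = −η(Z)(∇_X η)(φY) + η(Y)(∇_X η)(φZ). -/

import Mathlib

noncomputable section

/-!
An abstract model of smooth geometry: `F` plays the role of the algebra of
smooth real-valued functions on a manifold `M`, `V` plays the role of the
`C^∞(M)`-module of smooth vector fields on `M` (with its Lie bracket), and
`D X f` represents the directional derivative of the function `f` along the
vector field `X`.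
-/
structure SmoothSetting (F V : Type*) [CommRing F] [Algebra ℝ F]
    [LieRing V] [Module F V] [Module ℝ V] [IsScalarTower ℝ F V] where
  D : V → F → F
  D_add : ∀ (X : V) (f g : F), D X (f + g) = D X f + D X g
  D_mul : ∀ (X : V) (f g : F), D X (f * g) = f * D X g + g * D X f
  D_addX : ∀ (X Y : V) (f : F), D (X + Y) f = D X f + D Y f
  D_smulX : ∀ (f : F) (X : V) (k : F), D (f • X) k = f * D X k
  D_bracket : ∀ (X Y : V) (f : F), D ⁅X, Y⁆ f = D X (D Y f) - D Y (D X f)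
  bracket_smul : ∀ (f : F) (X Y : V), ⁅X, f • Y⁆ = f • ⁅X, Y⁆ + D X f • Y

/-- An almost contact metric manifold, modelled abstractly: a quadruple
`(φ, ξ, η, g)` where `φ` is a `(1,1)`-tensor field, `ξ` a vector field, `η` a
one-form and `g` a Riemannian metric, satisfying `φ² = -Id + η ⊗ ξ`,
`η(ξ) = 1` and `g(φX, φY) = g(X,Y) - η(X)η(Y)`, together with the Levi-Civita
connection `nabla` of `g` (characterised by metricity and torsion-freeness). -/
structure ACMS (F V : Type*) [CommRing F] [PartialOrder F] [Algebra ℝ F]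
    [LieRing V] [Module F V] [Module ℝ V] [IsScalarTower ℝ F V]
    extends SmoothSetting F V where
  phi : V → V
  xi : V
  eta : V → F
  g : V → V → F
  phi_add : ∀ X Y : V, phi (X + Y) = phi X + phi Y
  phi_smul : ∀ (f : F) (X : V), phi (f • X) = f • phi X
  eta_add : ∀ X Y : V, eta (X + Y) = eta X + eta Y
  eta_smul : ∀ (f : F) (X : V), eta (f • X) = f * eta X
  g_addX : ∀ X Y Z : V, g (X + Y) Z = g X Z + g Y Z
  g_smulX : ∀ (f : F) (X Y : V), g (f • X) Y = f * g X Y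
  g_symm : ∀ X Y : V, g X Y = g Y X
  g_nondeg : ∀ X : V, (∀ Y : V, g X Y = 0) → X = 0
  g_pos : ∀ X : V, 0 ≤ g X X
  phi_phi : ∀ X : V, phi (phi X) = -X + eta X • xi
  eta_xi : eta xi = 1
  phi_xi : phi xi = 0
  eta_phi : ∀ X : V, eta (phi X) = 0
  g_phi_phi : ∀ X Y : V, g (phi X) (phi Y) = g X Y - eta X * eta Y
  nabla : V → V → V
  nabla_addX : ∀ X Y Z : V, nabla (X + Y) Z = nabla X Z + nabla Y Z
  nabla_smulX : ∀ (f : F) (X Y : V), nabla (f • X) Y = f • nabla X Y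
  nabla_addY : ∀ X Y Z : V, nabla X (Y + Z) = nabla X Y + nabla X Z
  nabla_leibniz : ∀ (X : V) (f : F) (Y : V),
    nabla X (f • Y) = D X f • Y + f • nabla X Y
  nabla_torsion_free : ∀ X Y : V, nabla X Y - nabla Y X = ⁅X, Y⁆
  nabla_metric : ∀ X Y Z : V,
    D X (g Y Z) = g (nabla X Y) Z + g Y (nabla X Z)

namespace ACMS

variable {F V : Type*} [CommRing F] [PartialOrder F] [Algebra ℝ F]
  [LieRing V] [Module F V] [Module ℝ V] [IsScalarTower ℝ F V]
variable (A : ACMS F V)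

/-- The fundamental form `Φ(X,Y) = g(X, φY)`. -/
def Phi (X Y : V) : F := A.g X (A.phi Y)

/-- The exterior derivative `dη`, via the coboundary formula
`2 dη(X,Y) = X η(Y) - Y η(X) - η([X,Y])`. -/
def dEta (X Y : V) : F :=
  ((1:ℝ)/2) • (A.D X (A.eta Y) - A.D Y (A.eta X) - A.eta ⁅X, Y⁆)

/-- The exterior derivative `dΦ`, via the coboundary formula. -/
def dPhi (X Y Z : V) : F :=
  ((1:ℝ)/3) • (A.D X (A.Phi Y Z) + A.D Y (A.Phi Z X) + A.D Z (A.Phi X Y)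
    - A.Phi ⁅X, Y⁆ Z - A.Phi ⁅Y, Z⁆ X - A.Phi ⁅Z, X⁆ Y)

/-- The Lie derivative `(L_ξ η)(X)`. -/
def lieEta (X : V) : F := A.D A.xi (A.eta X) - A.eta ⁅A.xi, X⁆

/-- The Lie derivative `(L_ξ g)(X,Y)`. -/
def lieG (X Y : V) : F :=
  A.D A.xi (A.g X Y) - A.g ⁅A.xi, X⁆ Y - A.g X ⁅A.xi, Y⁆

/-- The Lie derivative `(L_ξ Φ)(X,Y)`. -/
def liePhiForm (X Y : V) : F :=
  A.D A.xi (A.Phi X Y) - A.Phi ⁅A.xi, X⁆ Y - A.Phi X ⁅A.xi, Y⁆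

/-- The Lie derivative `(L_ξ φ)(X)`. -/
def liePhi (X : V) : V := ⁅A.xi, A.phi X⁆ - A.phi ⁅A.xi, X⁆

/-- The tensor field `h = (1/2) L_ξ φ`. -/
def h (X : V) : V := ((1:ℝ)/2) • A.liePhi X

/-- The Nijenhuis torsion `[φ,φ](X,Y)`. -/
def nijPhi (X Y : V) : V :=
  A.phi (A.phi ⁅X, Y⁆) + ⁅A.phi X, A.phi Y⁆
    - A.phi ⁅A.phi X, Y⁆ - A.phi ⁅X, A.phi Y⁆

/-- The tensor `N⁽¹⁾(X,Y) = [φ,φ](X,Y) + 2 dη(X,Y) ξ`. -/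
def N1 (X Y : V) : V := A.nijPhi X Y + (2 * A.dEta X Y) • A.xi

/-- The tensor `N⁽²⁾(X,Y) = (L_{φX} η)(Y) - (L_{φY} η)(X)`. -/
def N2 (X Y : V) : F :=
  (A.D (A.phi X) (A.eta Y) - A.eta ⁅A.phi X, Y⁆)
    - (A.D (A.phi Y) (A.eta X) - A.eta ⁅A.phi Y, X⁆)

/-- The covariant derivative `(∇_X φ)(Y)`. -/
def covPhi (X Y : V) : V := A.nabla X (A.phi Y) - A.phi (A.nabla X Y)

/-- The covariant derivative `(∇_X η)(Y)`. -/
def covEta (X Y : V) : F := A.D X (A.eta Y) - A.eta (A.nabla X Y)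

/-- `M` is `η`-normal: `N⁽¹⁾(X,Y) = 0` whenever `η(X) = η(Y) = 0`. -/
def EtaNormal : Prop := ∀ X Y : V, A.eta X = 0 → A.eta Y = 0 → A.N1 X Y = 0

/-- `M` is normal: `N⁽¹⁾ = 0` identically. -/
def Normal : Prop := ∀ X Y : V, A.N1 X Y = 0

/-- `M` is a CR-manifold: for all `X, Y` with `η(X) = η(Y) = 0` there is `Z`
with `η(Z) = 0` and `[X - iφX, Y - iφY] = Z - iφZ` (stated here via its real
and imaginary parts). -/
def IsCR : Prop := ∀ X Y : V, A.eta X = 0 → A.eta Y = 0 →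
  ∃ Z : V, A.eta Z = 0 ∧ ⁅X, Y⁆ - ⁅A.phi X, A.phi Y⁆ = Z ∧
    ⁅A.phi X, Y⁆ + ⁅X, A.phi Y⁆ = A.phi Z

/-- `Dc` is a linear connection on `M`. -/
def IsConnection (Dc : V → V → V) : Prop :=
  (∀ X Y Z : V, Dc (X + Y) Z = Dc X Z + Dc Y Z) ∧
  (∀ (f : F) (X Y : V), Dc (f • X) Y = f • Dc X Y) ∧
  (∀ X Y Z : V, Dc X (Y + Z) = Dc X Y + Dc X Z) ∧
  (∀ (X : V) (f : F) (Y : V), Dc X (f • Y) = A.D X f • Y + f • Dc X Y)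

/-- `Dc` is a parallelization: a linear connection making the whole almost
contact metric structure parallel, `∇̃φ = 0`, `∇̃ξ = 0`, `∇̃η = 0`, `∇̃g = 0`. -/
def IsParallelization (Dc : V → V → V) : Prop :=
  A.IsConnection Dc ∧
  (∀ X Y : V, Dc X (A.phi Y) = A.phi (Dc X Y)) ∧
  (∀ X : V, Dc X A.xi = 0) ∧
  (∀ X Y : V, A.D X (A.eta Y) = A.eta (Dc X Y)) ∧
  (∀ X Y Z : V, A.D X (A.g Y Z) = A.g (Dc X Y) Z + A.g Y (Dc X Z))

end ACMS


/-! ### Auxiliary lemmas -/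

section AuxScalar
variable {F : Type*} [CommRing F] [Algebra ℝ F]

lemma mulhalf (x : F) : (2:F) * (((1:ℝ)/2) • x) = x := by
  rw [Algebra.smul_def,
    show ((2:F)) = (algebraMap ℝ F) 2 from (map_ofNat (algebraMap ℝ F) 2).symm,
    ← mul_assoc, ← map_mul]
  norm_num

lemma multhird (x : F) : (3:F) * (((1:ℝ)/3) • x) = x := by
  rw [Algebra.smul_def,
    show ((3:F)) = (algebraMap ℝ F) 3 from (map_ofNat (algebraMap ℝ F) 3).symm,
    ← mul_assoc, ← map_mul]
  norm_num

lemma halfsmul (x : F) : ((1:ℝ)/2) • ((2:F) * x) = x := by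
  rw [Algebra.smul_def,
    show ((2:F)) = (algebraMap ℝ F) 2 from (map_ofNat (algebraMap ℝ F) 2).symm,
    ← mul_assoc, ← map_mul]
  norm_num

lemma halfcancel {a b : F} (h : (2:F) * a = (2:F) * b) : a = b := by
  have h2 := congrArg (fun x : F => ((1:ℝ)/2) • x) h
  simpa only [halfsmul] using h2

end AuxScalar

namespace ACMS
variable {F V : Type*} [CommRing F] [PartialOrder F] [Algebra ℝ F]
  [LieRing V] [Module F V] [Module ℝ V] [IsScalarTower ℝ F V]
variable (A : ACMS F V)

lemma aDzero (X : V) : A.D X 0 = 0 := by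
  have h := A.D_add X 0 0
  rw [add_zero] at h
  exact right_eq_add.mp h

lemma aDzeroX (f : F) : A.D (0 : V) f = 0 := by
  have h := A.D_addX 0 0 f
  rw [add_zero] at h
  exact right_eq_add.mp h

lemma aDone (X : V) : A.D X 1 = 0 := by
  have h := A.D_mul X 1 1
  rw [mul_one, one_mul] at h
  exact right_eq_add.mp h

lemma aDneg (X : V) (f : F) : A.D X (-f) = - A.D X f := by
  have h := A.D_add X f (-f)
  rw [add_neg_cancel, A.aDzero] at h
  exact (eq_neg_of_add_eq_zero_right h.symm)

lemma aDsub (X : V) (f g : F) : A.D X (f - g) = A.D X f - A.D X g := by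
  rw [sub_eq_add_neg, A.D_add, A.aDneg, sub_eq_add_neg]

lemma aDnegX (X : V) (f : F) : A.D (-X) f = - A.D X f := by
  rw [← neg_one_smul F X, A.D_smulX, neg_one_mul]

lemma aetazero : A.eta 0 = 0 := by
  have h := A.eta_add 0 0
  rw [add_zero] at h
  exact right_eq_add.mp h

lemma aetaneg (X : V) : A.eta (-X) = - A.eta X := by
  rw [← neg_one_smul F X, A.eta_smul, neg_one_mul]

lemma aetasub (X Y : V) : A.eta (X - Y) = A.eta X - A.eta Y := by
  rw [sub_eq_add_neg, A.eta_add, A.aetaneg, sub_eq_add_neg]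

lemma aphizero : A.phi 0 = 0 := by
  have h := A.phi_add 0 0
  rw [add_zero] at h
  exact right_eq_add.mp h

lemma aphineg (X : V) : A.phi (-X) = - A.phi X := by
  rw [← neg_one_smul F X, A.phi_smul, neg_one_smul]

lemma aphisub (X Y : V) : A.phi (X - Y) = A.phi X - A.phi Y := by
  rw [sub_eq_add_neg, A.phi_add, A.aphineg, sub_eq_add_neg]

lemma agzeroX (Y : V) : A.g 0 Y = 0 := by
  have h := A.g_addX 0 0 Y
  rw [add_zero] at h
  exact right_eq_add.mp h

lemma agzeroY (X : V) : A.g X 0 = 0 := by rw [A.g_symm]; exact A.agzeroX X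

lemma agnegX (X Y : V) : A.g (-X) Y = - A.g X Y := by
  rw [← neg_one_smul F X, A.g_smulX, neg_one_mul]

lemma agnegY (X Y : V) : A.g X (-Y) = - A.g X Y := by
  rw [A.g_symm, A.agnegX, A.g_symm]

lemma agaddY (X Y Z : V) : A.g X (Y + Z) = A.g X Y + A.g X Z := by
  rw [A.g_symm, A.g_addX, A.g_symm Y X, A.g_symm Z X]

lemma agsmulY (f : F) (X Y : V) : A.g X (f • Y) = f * A.g X Y := by
  rw [A.g_symm, A.g_smulX, A.g_symm Y X]

lemma agsubX (X Y Z : V) : A.g (X - Y) Z = A.g X Z - A.g Y Z := by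
  rw [sub_eq_add_neg, A.g_addX, A.agnegX, sub_eq_add_neg]

lemma agsubY (X Y Z : V) : A.g X (Y - Z) = A.g X Y - A.g X Z := by
  rw [sub_eq_add_neg, A.agaddY, A.agnegY, sub_eq_add_neg]

lemma agxiR (X : V) : A.g X A.xi = A.eta X := by
  have h := A.g_phi_phi X A.xi
  rw [A.phi_xi, A.agzeroY, A.eta_xi, mul_one] at h
  linear_combination -h

lemma agxiL (X : V) : A.g A.xi X = A.eta X := by rw [A.g_symm]; exact A.agxiR X

lemma agflip (U W : V) : A.g U (A.phi W) = - A.g (A.phi U) W := by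
  have h := A.g_phi_phi U (A.phi W)
  rw [A.eta_phi, mul_zero, sub_zero, A.phi_phi] at h
  rw [A.agaddY, A.agnegY, A.agsmulY, A.agxiR, A.eta_phi, mul_zero, add_zero] at h
  linear_combination -h

lemma abracket_smul_left (f : F) (X Y : V) :
    ⁅f • X, Y⁆ = f • ⁅X, Y⁆ - A.D Y f • X := by
  rw [← lie_skew, A.bracket_smul, neg_add, ← smul_neg, lie_skew, sub_eq_add_neg]

lemma two_dEta (X Y : V) :
    (2:F) * A.dEta X Y = A.D X (A.eta Y) - A.D Y (A.eta X) - A.eta ⁅X, Y⁆ := by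
  simp only [ACMS.dEta]; exact mulhalf _

lemma three_dPhi (X Y Z : V) :
    (3:F) * A.dPhi X Y Z =
      A.D X (A.Phi Y Z) + A.D Y (A.Phi Z X) + A.D Z (A.Phi X Y)
        - A.Phi ⁅X, Y⁆ Z - A.Phi ⁅Y, Z⁆ X - A.Phi ⁅Z, X⁆ Y := by
  simp only [ACMS.dPhi]; exact multhird _

lemma koszul (X Y Z : V) :
    (2:F) * A.g (A.nabla X Y) Z =
      A.D X (A.g Y Z) + A.D Y (A.g Z X) - A.D Z (A.g X Y)
        + A.g ⁅X, Y⁆ Z - A.g ⁅X, Z⁆ Y - A.g ⁅Y, Z⁆ X := by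
  have h1 := A.nabla_metric X Y Z
  have h2 := A.nabla_metric Y Z X
  have h3 := A.nabla_metric Z X Y
  have b1 : A.g ⁅X, Y⁆ Z = A.g (A.nabla X Y) Z - A.g (A.nabla Y X) Z := by
    rw [← A.nabla_torsion_free, A.agsubX]
  have b2 : A.g ⁅X, Z⁆ Y = A.g (A.nabla X Z) Y - A.g (A.nabla Z X) Y := by
    rw [← A.nabla_torsion_free, A.agsubX]
  have b3 : A.g ⁅Y, Z⁆ X = A.g (A.nabla Y Z) X - A.g (A.nabla Z Y) X := by
    rw [← A.nabla_torsion_free, A.agsubX]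
  have s1 := A.g_symm Y (A.nabla X Z)
  have s2 := A.g_symm Z (A.nabla Y X)
  have s3 := A.g_symm X (A.nabla Z Y)
  linear_combination -h1 - h2 + h3 - b1 + b2 + b3 - s1 - s2 + s3

lemma nabla_zeroY (X : V) : A.nabla X 0 = 0 := by
  have h := A.nabla_addY X 0 0
  rw [add_zero] at h
  exact right_eq_add.mp h

lemma dEta_zeroL (X : V) : A.dEta 0 X = 0 := by
  apply halfcancel
  rw [A.two_dEta, mul_zero, A.aDzeroX, A.aetazero, A.aDzero, zero_lie, A.aetazero]
  ring

lemma dEta_anti (X Y : V) : A.dEta X Y = - A.dEta Y X := by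
  apply halfcancel
  rw [mul_neg, A.two_dEta, A.two_dEta,
    show ⁅Y, X⁆ = -⁅X, Y⁆ from (lie_skew Y X).symm, A.aetaneg]
  ring

end ACMS

/-- On a quasi-Sasakian manifold (a normal almost contact metric
manifold with closed fundamental form) the Levi-Civita connection satisfies
`g((∇_X φ)Y, Z) = dη(φY, X) η(Z) - dη(φZ, X) η(Y)` and
`g(∇_X ξ, Y) = dη(X, Y)`; equivalently
`g((∇_X φ)Y, Z) = -η(Z)(∇_X η)(φY) + η(Y)(∇_X η)(φZ)`. -/
theorem quasi_sasakian_covariant_derivative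
    {F V : Type*} [CommRing F] [PartialOrder F] [Algebra ℝ F]
    [LieRing V] [Module F V] [Module ℝ V] [IsScalarTower ℝ F V]
    (A : ACMS F V) (hN : A.Normal)
    (hclosed : ∀ X Y Z : V, A.dPhi X Y Z = 0) :
    (∀ X Y Z : V, A.g (A.covPhi X Y) Z =
      A.dEta (A.phi Y) X * A.eta Z - A.dEta (A.phi Z) X * A.eta Y) ∧
    (∀ X Y : V, A.g (A.nabla X A.xi) Y = A.dEta X Y) ∧
    (∀ X Y Z : V, A.g (A.covPhi X Y) Z =
      - A.eta Z * A.covEta X (A.phi Y) + A.eta Y * A.covEta X (A.phi Z)) := by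
  -- dη(ξ, ·) = 0, from normality
  have hxi : ∀ W : V, A.dEta A.xi W = 0 := by
    intro W
    apply halfcancel
    rw [A.two_dEta, mul_zero]
    have h5 := congrArg A.eta (hN A.xi W)
    simp only [ACMS.N1, ACMS.nijPhi, ACMS.dEta, A.phi_add, A.phi_smul, A.aphizero,
      A.aphineg, A.aphisub, A.phi_phi, A.phi_xi, A.eta_add, A.eta_smul, A.aetazero,
      A.aetaneg, A.aetasub, A.eta_xi, A.eta_phi, A.D_add, A.aDsub, A.aDneg, A.aDzero,
      A.aDone, A.D_mul, A.D_addX, A.D_smulX, A.aDzeroX, A.aDnegX, A.bracket_smul,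
      A.abracket_smul_left, lie_add, lie_sub, lie_neg, add_lie, sub_lie, neg_lie,
      zero_lie, lie_zero, smul_zero, zero_smul, one_smul, mul_one, mul_zero, zero_mul,
      add_zero, zero_add, neg_zero, sub_zero, neg_neg, mulhalf] at h5
    rw [A.eta_xi, A.aDone]
    linear_combination h5
  have part1 : ∀ X Y Z : V, A.g (A.covPhi X Y) Z =
      A.dEta (A.phi Y) X * A.eta Z - A.dEta (A.phi Z) X * A.eta Y := by
    intro X Y Z
    have rb01 : ⁅Y, X⁆ = -⁅X, Y⁆ := (lie_skew Y X).symm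
    have rb02 : ⁅Z, X⁆ = -⁅X, Z⁆ := (lie_skew Z X).symm
    have rb03 : ⁅(A.phi X), X⁆ = -⁅X, (A.phi X)⁆ := (lie_skew (A.phi X) X).symm
    have rb04 : ⁅(A.phi Y), X⁆ = -⁅X, (A.phi Y)⁆ := (lie_skew (A.phi Y) X).symm
    have rb05 : ⁅(A.phi Z), X⁆ = -⁅X, (A.phi Z)⁆ := (lie_skew (A.phi Z) X).symm
    have rb06 : ⁅A.xi, X⁆ = -⁅X, A.xi⁆ := (lie_skew A.xi X).symm
    have rb12 : ⁅Z, Y⁆ = -⁅Y, Z⁆ := (lie_skew Z Y).symm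
    have rb13 : ⁅(A.phi X), Y⁆ = -⁅Y, (A.phi X)⁆ := (lie_skew (A.phi X) Y).symm
    have rb14 : ⁅(A.phi Y), Y⁆ = -⁅Y, (A.phi Y)⁆ := (lie_skew (A.phi Y) Y).symm
    have rb15 : ⁅(A.phi Z), Y⁆ = -⁅Y, (A.phi Z)⁆ := (lie_skew (A.phi Z) Y).symm
    have rb16 : ⁅A.xi, Y⁆ = -⁅Y, A.xi⁆ := (lie_skew A.xi Y).symm
    have rb23 : ⁅(A.phi X), Z⁆ = -⁅Z, (A.phi X)⁆ := (lie_skew (A.phi X) Z).symm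
    have rb24 : ⁅(A.phi Y), Z⁆ = -⁅Z, (A.phi Y)⁆ := (lie_skew (A.phi Y) Z).symm
    have rb25 : ⁅(A.phi Z), Z⁆ = -⁅Z, (A.phi Z)⁆ := (lie_skew (A.phi Z) Z).symm
    have rb26 : ⁅A.xi, Z⁆ = -⁅Z, A.xi⁆ := (lie_skew A.xi Z).symm
    have rb34 : ⁅(A.phi Y), (A.phi X)⁆ = -⁅(A.phi X), (A.phi Y)⁆ := (lie_skew (A.phi Y) (A.phi X)).symm
    have rb35 : ⁅(A.phi Z), (A.phi X)⁆ = -⁅(A.phi X), (A.phi Z)⁆ := (lie_skew (A.phi Z) (A.phi X)).symm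
    have rb36 : ⁅A.xi, (A.phi X)⁆ = -⁅(A.phi X), A.xi⁆ := (lie_skew A.xi (A.phi X)).symm
    have rb45 : ⁅(A.phi Z), (A.phi Y)⁆ = -⁅(A.phi Y), (A.phi Z)⁆ := (lie_skew (A.phi Z) (A.phi Y)).symm
    have rb46 : ⁅A.xi, (A.phi Y)⁆ = -⁅(A.phi Y), A.xi⁆ := (lie_skew A.xi (A.phi Y)).symm
    have rb56 : ⁅A.xi, (A.phi Z)⁆ = -⁅(A.phi Z), A.xi⁆ := (lie_skew A.xi (A.phi Z)).symm
    have gsYX : A.g Y X = A.g X Y := A.g_symm Y X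
    have gsZX : A.g Z X = A.g X Z := A.g_symm Z X
    have gsZY : A.g Z Y = A.g Y Z := A.g_symm Z Y
    have gpYX : A.g (A.phi Y) X = - A.g (A.phi X) Y := by
      rw [A.g_symm, A.agflip]
    have gpZX : A.g (A.phi Z) X = - A.g (A.phi X) Z := by
      rw [A.g_symm, A.agflip]
    have gpZY : A.g (A.phi Z) Y = - A.g (A.phi Y) Z := by
      rw [A.g_symm, A.agflip]
    have hK1 : (2:F) * A.g (A.nabla X (A.phi Y)) Z = (A.D X (A.g (A.phi Y) Z)) + (A.D Z (A.g (A.phi X) Y)) + (A.D (A.phi Y) (A.g X Z)) + (A.g (A.phi ⁅X, Z⁆) Y) + (A.g ⁅X, (A.phi Y)⁆ Z) + (A.g ⁅Z, (A.phi Y)⁆ X) := by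
      rw [A.koszul]
      simp only [A.phi_add, A.phi_smul, A.aphizero, A.aphineg, A.aphisub, A.phi_phi, A.phi_xi, A.eta_add, A.eta_smul, A.aetazero, A.aetaneg, A.aetasub, A.eta_xi, A.eta_phi, A.g_addX, A.agaddY, A.g_smulX, A.agsmulY, A.agnegX, A.agnegY, A.agsubX, A.agsubY, A.agzeroX, A.agzeroY, A.agxiL, A.agxiR, A.agflip, A.g_phi_phi, A.D_add, A.aDsub, A.aDneg, A.aDzero, A.aDone, A.D_mul, A.D_addX, A.D_smulX, A.aDzeroX, A.aDnegX, A.bracket_smul, A.abracket_smul_left, lie_add, lie_sub, lie_neg, add_lie, sub_lie, neg_lie, zero_lie, lie_zero, smul_zero, zero_smul, one_smul, mul_one, mul_zero, zero_mul, add_zero, zero_add, neg_zero, sub_zero, neg_neg, rb01, rb02, rb03, rb04, rb05, rb06, rb12, rb13, rb14, rb15, rb16, rb23, rb24, rb25, rb26, rb34, rb35, rb36, rb45, rb46, rb56, gsYX, gsZX, gsZY, gpYX, gpZX, gpZY]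
      ring
    have hK2 : (2:F) * A.g (A.nabla X Y) (A.phi Z) = - (A.D X (A.g (A.phi Y) Z)) - (A.D Y (A.g (A.phi X) Z)) - (A.D (A.phi Z) (A.g X Y)) - (A.g (A.phi ⁅X, Y⁆) Z) - (A.g ⁅X, (A.phi Z)⁆ Y) - (A.g ⁅Y, (A.phi Z)⁆ X) := by
      rw [A.koszul]
      simp only [A.phi_add, A.phi_smul, A.aphizero, A.aphineg, A.aphisub, A.phi_phi, A.phi_xi, A.eta_add, A.eta_smul, A.aetazero, A.aetaneg, A.aetasub, A.eta_xi, A.eta_phi, A.g_addX, A.agaddY, A.g_smulX, A.agsmulY, A.agnegX, A.agnegY, A.agsubX, A.agsubY, A.agzeroX, A.agzeroY, A.agxiL, A.agxiR, A.agflip, A.g_phi_phi, A.D_add, A.aDsub, A.aDneg, A.aDzero, A.aDone, A.D_mul, A.D_addX, A.D_smulX, A.aDzeroX, A.aDnegX, A.bracket_smul, A.abracket_smul_left, lie_add, lie_sub, lie_neg, add_lie, sub_lie, neg_lie, zero_lie, lie_zero, smul_zero, zero_smul, one_smul, mul_one, mul_zero, zero_mul, add_zero, zero_add, neg_zero, sub_zero,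 neg_neg, rb01, rb02, rb03, rb04, rb05, rb06, rb12, rb13, rb14, rb15, rb16, rb23, rb24, rb25, rb26, rb34, rb35, rb36, rb45, rb46, rb56, gsYX, gsZX, gsZY, gpYX, gpZX, gpZY]
      ring
    have hd1 : (2:F) * A.dEta (A.phi Y) X = (A.D (A.phi Y) (A.eta X)) + (A.eta ⁅X, (A.phi Y)⁆) := by
      rw [A.two_dEta]
      simp only [A.phi_add, A.phi_smul, A.aphizero, A.aphineg, A.aphisub, A.phi_phi, A.phi_xi, A.eta_add, A.eta_smul, A.aetazero, A.aetaneg, A.aetasub, A.eta_xi, A.eta_phi, A.g_addX, A.agaddY, A.g_smulX, A.agsmulY, A.agnegX, A.agnegY, A.agsubX, A.agsubY, A.agzeroX, A.agzeroY, A.agxiL, A.agxiR, A.agflip, A.g_phi_phi, A.D_add, A.aDsub, A.aDneg, A.aDzero, A.aDone, A.D_mul, A.D_addX, A.D_smulX, A.aDzeroX, A.aDnegX, A.bracket_smul, A.abracket_smul_left, lie_add, lie_sub, lie_neg, add_lie, sub_lie, neg_lie, zero_lie, lie_zero, smul_zero, zero_smul, one_smul, mul_one, mul_zero, zero_mul,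 add_zero, zero_add, neg_zero, sub_zero, neg_neg, rb01, rb02, rb03, rb04, rb05, rb06, rb12, rb13, rb14, rb15, rb16, rb23, rb24, rb25, rb26, rb34, rb35, rb36, rb45, rb46, rb56, gsYX, gsZX, gsZY, gpYX, gpZX, gpZY]
      ring
    have hd2 : (2:F) * A.dEta (A.phi Z) X = (A.D (A.phi Z) (A.eta X)) + (A.eta ⁅X, (A.phi Z)⁆) := by
      rw [A.two_dEta]
      simp only [A.phi_add, A.phi_smul, A.aphizero, A.aphineg, A.aphisub, A.phi_phi, A.phi_xi, A.eta_add, A.eta_smul, A.aetazero, A.aetaneg, A.aetasub, A.eta_xi, A.eta_phi, A.g_addX, A.agaddY, A.g_smulX, A.agsmulY, A.agnegX, A.agnegY, A.agsubX, A.agsubY, A.agzeroX, A.agzeroY, A.agxiL, A.agxiR, A.agflip, A.g_phi_phi, A.D_add, A.aDsub, A.aDneg, A.aDzero, A.aDone, A.D_mul, A.D_addX, A.D_smulX, A.aDzeroX, A.aDnegX, A.bracket_smul, A.abracket_smul_left, lie_add, lie_sub, lie_neg, add_lie, sub_lie, neg_lie, zero_lie, lie_zero, smul_zero, zero_smul,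 one_smul, mul_one, mul_zero, zero_mul, add_zero, zero_add, neg_zero, sub_zero, neg_neg, rb01, rb02, rb03, rb04, rb05, rb06, rb12, rb13, rb14, rb15, rb16, rb23, rb24, rb25, rb26, rb34, rb35, rb36, rb45, rb46, rb56, gsYX, gsZX, gsZY, gpYX, gpZX, gpZY]
      ring
    have e1 : - (A.D X (A.g (A.phi Y) Z)) - (A.D (A.phi Y) (A.eta X)) * (A.eta Z) - (A.D (A.phi Y) (A.eta Z)) * (A.eta X) + (A.D (A.phi Y) (A.g X Z)) + (A.D (A.phi Z) (A.eta X)) * (A.eta Y) + (A.D (A.phi Z) (A.eta Y)) * (A.eta X) - (A.D (A.phi Z) (A.g X Y)) + (A.g (A.phi ⁅(A.phi Y), (A.phi Z)⁆) X) + (A.eta Y) * (A.eta ⁅X, (A.phi Z)⁆) - (A.eta Z) * (A.eta ⁅X, (A.phi Y)⁆) + (A.g ⁅X, (A.phi Y)⁆ Z) - (A.g ⁅X, (A.phi Z)⁆ Y) = (0:F) := by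
      have h := (A.three_dPhi X (A.phi Y) (A.phi Z)).symm
      rw [hclosed, mul_zero] at h
      rw [← h]
      simp only [ACMS.Phi, A.phi_add, A.phi_smul, A.aphizero, A.aphineg, A.aphisub, A.phi_phi, A.phi_xi, A.eta_add, A.eta_smul, A.aetazero, A.aetaneg, A.aetasub, A.eta_xi, A.eta_phi, A.g_addX, A.agaddY, A.g_smulX, A.agsmulY, A.agnegX, A.agnegY, A.agsubX, A.agsubY, A.agzeroX, A.agzeroY, A.agxiL, A.agxiR, A.agflip, A.g_phi_phi, A.D_add, A.aDsub, A.aDneg, A.aDzero, A.aDone, A.D_mul, A.D_addX, A.D_smulX, A.aDzeroX, A.aDnegX, A.bracket_smul, A.abracket_smul_left, lie_add, lie_sub, lie_neg, add_lie, sub_lie, neg_lie, zero_lie, lie_zero, smul_zero, zero_smul, one_smul, mul_one, mul_zero, zero_mul, add_zero, zero_add, neg_zero, sub_zero, neg_neg, rb01, rb02, rb03, rb04, rb05, rb06, rb12, rb13, rb14, rb15, rb16, rb23, rb24, rb25, rb26, rb34, rb35, rb36, rb45, rb46, rb56, gsYX, gsZX, gsZY, gpYX, gpZX, gpZY]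
      ring
    have e2 : - (A.D X (A.g (A.phi Y) Z)) + (A.D Y (A.g (A.phi X) Z)) - (A.D Z (A.g (A.phi X) Y)) + (A.g (A.phi ⁅X, Y⁆) Z) - (A.g (A.phi ⁅X, Z⁆) Y) + (A.g (A.phi ⁅Y, Z⁆) X) = (0:F) := by
      have h := (A.three_dPhi X Y Z).symm
      rw [hclosed, mul_zero] at h
      rw [← h]
      simp only [ACMS.Phi, A.phi_add, A.phi_smul, A.aphizero, A.aphineg, A.aphisub, A.phi_phi, A.phi_xi, A.eta_add, A.eta_smul, A.aetazero, A.aetaneg, A.aetasub, A.eta_xi, A.eta_phi, A.g_addX, A.agaddY, A.g_smulX, A.agsmulY, A.agnegX, A.agnegY, A.agsubX, A.agsubY, A.agzeroX, A.agzeroY, A.agxiL, A.agxiR, A.agflip, A.g_phi_phi, A.D_add, A.aDsub, A.aDneg, A.aDzero, A.aDone, A.D_mul, A.D_addX, A.D_smulX, A.aDzeroX, A.aDnegX, A.bracket_smul, A.abracket_smul_left, lie_add, lie_sub, lie_neg, add_lie, sub_lie, neg_lie, zero_lie, lie_zero, smul_zero, zero_smul, one_smul, mul_one, mul_zero, zero_mul,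 add_zero, zero_add, neg_zero, sub_zero, neg_neg, rb01, rb02, rb03, rb04, rb05, rb06, rb12, rb13, rb14, rb15, rb16, rb23, rb24, rb25, rb26, rb34, rb35, rb36, rb45, rb46, rb56, gsYX, gsZX, gsZY, gpYX, gpZX, gpZY]
      ring
    have e3 : (A.g (A.phi ⁅Y, Z⁆) X) - (A.g (A.phi ⁅(A.phi Y), (A.phi Z)⁆) X) + (A.eta X) * (A.eta ⁅Y, (A.phi Z)⁆) - (A.eta X) * (A.eta ⁅Z, (A.phi Y)⁆) - (A.g ⁅Y, (A.phi Z)⁆ X) + (A.g ⁅Z, (A.phi Y)⁆ X) = (0:F) := by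
      have h : A.g (A.N1 Y Z) (A.phi X) = 0 := by rw [hN]; exact A.agzeroX _
      rw [← h]
      simp only [ACMS.N1, ACMS.nijPhi, A.phi_add, A.phi_smul, A.aphizero, A.aphineg, A.aphisub, A.phi_phi, A.phi_xi, A.eta_add, A.eta_smul, A.aetazero, A.aetaneg, A.aetasub, A.eta_xi, A.eta_phi, A.g_addX, A.agaddY, A.g_smulX, A.agsmulY, A.agnegX, A.agnegY, A.agsubX, A.agsubY, A.agzeroX, A.agzeroY, A.agxiL, A.agxiR, A.agflip, A.g_phi_phi, A.D_add, A.aDsub, A.aDneg, A.aDzero, A.aDone, A.D_mul, A.D_addX, A.D_smulX, A.aDzeroX, A.aDnegX, A.bracket_smul, A.abracket_smul_left, lie_add, lie_sub, lie_neg, add_lie, sub_lie, neg_lie, zero_lie, lie_zero, smul_zero, zero_smul, one_smul, mul_one, mul_zero, zero_mul, add_zero, zero_add, neg_zero, sub_zero, neg_neg, rb01, rb02, rb03, rb04, rb05, rb06, rb12, rb13, rb14, rb15, rb16, rb23, rb24, rb25, rb26, rb34, rb35, rb36, rb45, rb46, rb56, gsYX, gsZX, gsZY, gpYX, gpZX,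 gpZY]
      ring
    have e4 : (A.D (A.phi Y) (A.eta Z)) - (A.D (A.phi Z) (A.eta Y)) + (A.eta Z) * (A.eta ⁅(A.phi Y), A.xi⁆) - (A.eta ⁅Y, (A.phi Z)⁆) + (A.eta ⁅Z, (A.phi Y)⁆) = (0:F) := by
      have h : A.eta (A.N1 Y (A.phi Z)) = 0 := by rw [hN]; exact A.aetazero
      rw [← h]
      simp only [ACMS.N1, ACMS.nijPhi, ACMS.dEta, mulhalf, A.phi_add, A.phi_smul, A.aphizero, A.aphineg, A.aphisub, A.phi_phi, A.phi_xi, A.eta_add, A.eta_smul, A.aetazero, A.aetaneg, A.aetasub, A.eta_xi, A.eta_phi, A.g_addX, A.agaddY, A.g_smulX, A.agsmulY, A.agnegX, A.agnegY, A.agsubX, A.agsubY, A.agzeroX, A.agzeroY, A.agxiL, A.agxiR, A.agflip, A.g_phi_phi, A.D_add, A.aDsub, A.aDneg, A.aDzero, A.aDone, A.D_mul, A.D_addX, A.D_smulX, A.aDzeroX, A.aDnegX, A.bracket_smul, A.abracket_smul_left, lie_add, lie_sub, lie_neg, add_lie, sub_lie, neg_lie, zero_lie, lie_zero, smul_zero,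 zero_smul, one_smul, mul_one, mul_zero, zero_mul, add_zero, zero_add, neg_zero, sub_zero, neg_neg, rb01, rb02, rb03, rb04, rb05, rb06, rb12, rb13, rb14, rb15, rb16, rb23, rb24, rb25, rb26, rb34, rb35, rb36, rb45, rb46, rb56, gsYX, gsZX, gsZY, gpYX, gpZX, gpZY]
      ring
    have e5 : (A.eta ⁅(A.phi Y), A.xi⁆) = (0:F) := by
      have h : A.eta (A.N1 A.xi (A.phi Y)) = 0 := by rw [hN]; exact A.aetazero
      rw [← h]
      simp only [ACMS.N1, ACMS.nijPhi, ACMS.dEta, mulhalf, A.phi_add, A.phi_smul, A.aphizero, A.aphineg, A.aphisub, A.phi_phi, A.phi_xi, A.eta_add, A.eta_smul, A.aetazero, A.aetaneg, A.aetasub, A.eta_xi, A.eta_phi, A.g_addX, A.agaddY, A.g_smulX, A.agsmulY, A.agnegX, A.agnegY, A.agsubX, A.agsubY, A.agzeroX, A.agzeroY, A.agxiL, A.agxiR, A.agflip, A.g_phi_phi, A.D_add, A.aDsub, A.aDneg, A.aDzero, A.aDone, A.D_mul, A.D_addX, A.D_smulX, A.aDzeroX, A.aDnegX, A.bracket_smul,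 A.abracket_smul_left, lie_add, lie_sub, lie_neg, add_lie, sub_lie, neg_lie, zero_lie, lie_zero, smul_zero, zero_smul, one_smul, mul_one, mul_zero, zero_mul, add_zero, zero_add, neg_zero, sub_zero, neg_neg, rb01, rb02, rb03, rb04, rb05, rb06, rb12, rb13, rb14, rb15, rb16, rb23, rb24, rb25, rb26, rb34, rb35, rb36, rb45, rb46, rb56, gsYX, gsZX, gsZY, gpYX, gpZX, gpZY]
      ring
    have hcov : A.g (A.covPhi X Y) Z =
        A.g (A.nabla X (A.phi Y)) Z + A.g (A.nabla X Y) (A.phi Z) := by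
      simp only [ACMS.covPhi]
      rw [A.agsubX]
      linear_combination - A.agflip (A.nabla X Y) Z
    apply halfcancel
    rw [hcov]
    linear_combination hK1 + hK2 - A.eta Z * hd1 + A.eta Y * hd2 + e1 - e2 + e3
      + A.eta X * e4 - A.eta X * A.eta Z * e5
  have part2 : ∀ X Y : V, A.g (A.nabla X A.xi) Y = A.dEta X Y := by
    intro X Y
    have step1 : ∀ Z : V, A.g (A.phi (A.nabla X A.xi)) Z = A.dEta (A.phi Z) X := by
      intro Z
      have h := part1 X A.xi Z
      have hc : A.g (A.covPhi X A.xi) Z = - A.g (A.phi (A.nabla X A.xi)) Z := by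
        simp only [ACMS.covPhi, A.phi_xi, A.nabla_zeroY]
        rw [A.agsubX, A.agzeroX]
        ring
      rw [hc, A.phi_xi, A.dEta_zeroL, A.eta_xi, mul_one, zero_mul] at h
      linear_combination -h
    have step2 : A.eta (A.nabla X A.xi) = 0 := by
      have hm := A.nabla_metric X A.xi A.xi
      rw [show A.g A.xi A.xi = 1 by rw [A.agxiR, A.eta_xi], A.aDone,
        A.agxiR, A.agxiL] at hm
      apply halfcancel
      rw [mul_zero]
      linear_combination -hm
    have h2 := step1 (A.phi Y)
    rw [A.g_phi_phi, step2, zero_mul, sub_zero] at h2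
    have h3 : (2:F) * A.dEta (A.phi (A.phi Y)) X
        = (2:F) * (- A.dEta Y X + A.eta Y * A.dEta A.xi X) := by
      rw [A.two_dEta, mul_add, mul_neg, A.two_dEta,
        show (2:F) * (A.eta Y * A.dEta A.xi X) = A.eta Y * ((2:F) * A.dEta A.xi X) by
          ring, A.two_dEta]
      simp only [A.phi_phi, A.eta_add, A.aetaneg, A.eta_smul, A.eta_xi, mul_one,
        A.D_addX, A.aDnegX, A.D_smulX, A.D_add, A.aDsub, A.aDneg, A.aDzero, A.aDone,
        A.D_mul, add_lie, neg_lie, A.abracket_smul_left, A.aetasub, A.eta_add,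
        A.aetaneg, A.eta_smul, mul_zero, zero_mul, add_zero, zero_add, neg_zero,
        sub_zero, neg_neg]
      ring
    have h4 := halfcancel h3
    rw [h4, hxi X, mul_zero, add_zero, A.dEta_anti Y X, neg_neg] at h2
    exact h2
  have covEta_eq : ∀ X W : V, A.covEta X W = A.dEta X W := by
    intro X W
    have hm := A.nabla_metric X W A.xi
    simp only [ACMS.covEta]
    rw [show A.eta W = A.g W A.xi from (A.agxiR W).symm,
      show A.eta (A.nabla X W) = A.g (A.nabla X W) A.xi from (A.agxiR _).symm]
    linear_combination hm + A.g_symm W (A.nabla X A.xi) + part2 X W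
  refine ⟨part1, part2, ?_⟩
  intro X Y Z
  rw [covEta_eq, covEta_eq]
  linear_combination part1 X Y Z + A.eta Z * A.dEta_anti X (A.phi Y)
    - A.eta Y * A.dEta_anti X (A.phi Z)
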